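/- arXiv:1002.0143 — 3 statements merged into one kernel-verified Lean document; each statement's English description precedes it below -/
import Mathlib

section
/- Let ψ ∈ L²(ℝᵈ) and b ∈ C₀(ℝᵈ) (continuous with compact support). Then the operator C defined by (Cu)(x) = ∫_{ℝᵈ} (b(x) − b(y)) ψ(x−y) u(y) dy is a compact operator from the space of essentially bounded functions with support in a fixed compact set K ⊂ ℝᵈ (with the L∞ norm) into L^{p₀}(V) for every relatively compact open set V ⊂ ℝᵈ and every p₀ ≥ 1. More precisely: if (uₙ) is a bounded sequence in L∞(ℝᵈ) with supp uₙ ⊂ K for all n and uₙ ⇀ 0 weak-* in L∞, then ∫_V |C uₙ(x)|^{p₀} dx → 0 as n → ∞. -/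
open MeasureTheory Real Filter Metric
open scoped ENNReal NNReal

/-- If `ψ ∈ L²(ℝᵈ)`, `b` is continuous with compact support,
`(uₙ)` is bounded in `L∞`, supported in a fixed compact `K`, and `uₙ ⇀ 0`
weak-* in `L∞` (i.e. against all `L¹` test functions), then for every
relatively compact open `V` and every `p₀ ≥ 1`,
`∫_V ‖(C uₙ)(x)‖^{p₀} dx → 0`, where
`(C u)(x) = ∫ (b x − b y) ψ(x−y) u y dy`. -/
theorem stmt0
    {d : ℕ} (ψ b : EuclideanSpace ℝ (Fin d) → ℂ)
    (hψ : MemLp ψ 2 (volume : Measure (EuclideanSpace ℝ (Fin d))))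
    (hb : Continuous b) (hbsupp : HasCompactSupport b)
    (K : Set (EuclideanSpace ℝ (Fin d))) (hK : IsCompact K)
    (u : ℕ → EuclideanSpace ℝ (Fin d) → ℂ)
    (hum : ∀ n, Measurable (u n))
    (M : ℝ) (hbdd : ∀ n x, ‖u n x‖ ≤ M)
    (hsupp : ∀ n, Function.support (u n) ⊆ K)
    (hweak : ∀ g : EuclideanSpace ℝ (Fin d) → ℂ, Integrable g →
      Tendsto (fun n => ∫ y, u n y * g y) atTop (nhds 0))
    (V : Set (EuclideanSpace ℝ (Fin d))) (hV : IsOpen V)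
    (hVc : IsCompact (closure V)) (p₀ : ℝ) (hp₀ : 1 ≤ p₀) :
    Tendsto
      (fun n => ∫ x in V, ‖∫ y, (b x - b y) * ψ (x - y) * u n y‖ ^ p₀)
      atTop (nhds 0) := by

  obtain ⟨B, hB⟩ := hbsupp.exists_bound_of_continuous hb
  have hB0 : 0 ≤ B := le_trans (norm_nonneg _) (hB 0)
  have hM0 : 0 ≤ M := le_trans (norm_nonneg _) (hbdd 0 0)
  have hp0 : 0 ≤ p₀ := le_trans zero_le_one hp₀
  have hKm : MeasurableSet K := hK.isClosed.measurableSet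
  set S : ℝ≥0∞ := eLpNorm ψ 2 volume with hS
  -- measurability of translated ψ
  have hψx : ∀ x : (EuclideanSpace ℝ (Fin d)), AEStronglyMeasurable (fun y => ψ (x - y)) volume := fun x =>
    hψ.1.comp_measurePreserving (Measure.measurePreserving_sub_left volume x)
  -- Cauchy-Schwarz key bound
  have key : ∀ x : (EuclideanSpace ℝ (Fin d)), (∫⁻ y, (‖ψ (x - y)‖₊ : ℝ≥0∞) * K.indicator (fun _ => 1) y)
      ≤ S * (volume K) ^ (1/2 : ℝ) := by
    intro x
    have h22 : Real.HolderConjugate 2 2 := ⟨by norm_num, by norm_num, by norm_num⟩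
    have hf : AEMeasurable (fun y => (‖ψ (x - y)‖₊ : ℝ≥0∞)) volume := (hψx x).enorm
    have hg : AEMeasurable (K.indicator (fun _ => (1:ℝ≥0∞))) volume :=
      (measurable_const.indicator hKm).aemeasurable
    have H := ENNReal.lintegral_mul_le_Lp_mul_Lq volume h22 hf hg
    have h1 : (∫⁻ y, (‖ψ (x - y)‖₊ : ℝ≥0∞) ^ (2:ℝ))
        = ∫⁻ z, (‖ψ z‖₊ : ℝ≥0∞) ^ (2:ℝ) :=
      (Measure.measurePreserving_sub_left volume x).lintegral_comp_emb
        (MeasurableEquiv.subLeft x).measurableEmbedding (fun z => (‖ψ z‖₊ : ℝ≥0∞) ^ (2:ℝ))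
    have h2 : (∫⁻ y, (K.indicator (fun _ => (1:ℝ≥0∞)) y) ^ (2:ℝ)) = volume K := by
      have : ∀ y, (K.indicator (fun _ => (1:ℝ≥0∞)) y) ^ (2:ℝ)
          = K.indicator (fun _ => (1:ℝ≥0∞)) y := by
        intro y
        by_cases hy : y ∈ K <;>
          simp [hy, ENNReal.zero_rpow_of_pos (by norm_num : (0:ℝ) < 2)]
      simp_rw [this]
      rw [lintegral_indicator hKm]
      simp
    have hSe : S = (∫⁻ z, (‖ψ z‖₊ : ℝ≥0∞) ^ (2:ℝ)) ^ (1/2 : ℝ) := by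
      rw [hS, eLpNorm_eq_lintegral_rpow_enorm_toReal (by norm_num) (by norm_num)]
      norm_num
      rfl
    calc (∫⁻ y, (‖ψ (x - y)‖₊ : ℝ≥0∞) * K.indicator (fun _ => 1) y)
        ≤ (∫⁻ y, (‖ψ (x - y)‖₊ : ℝ≥0∞) ^ (2:ℝ)) ^ (1/2:ℝ)
          * (∫⁻ y, (K.indicator (fun _ => (1:ℝ≥0∞)) y) ^ (2:ℝ)) ^ (1/2:ℝ) := H
      _ = S * (volume K) ^ (1/2 : ℝ) := by rw [h1, h2, hSe]
  -- the uniform constant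
  set Ce : ℝ≥0∞ := ENNReal.ofReal (2*B*M) * (S * (volume K) ^ (1/2 : ℝ)) with hCe
  have hCetop : Ce ≠ ⊤ := by
    apply ENNReal.mul_ne_top ENNReal.ofReal_ne_top
    exact ENNReal.mul_ne_top hψ.2.ne
      (ENNReal.rpow_ne_top_of_nonneg (by norm_num) hK.measure_lt_top.ne)
  have hbxy : ∀ x y : (EuclideanSpace ℝ (Fin d)), ‖b x - b y‖ ≤ 2*B := fun x y =>
    (norm_sub_le _ _).trans (by linarith [hB x, hB y])
  -- pointwise bound on the integrand
  have hpt : ∀ n (x y : (EuclideanSpace ℝ (Fin d))), (‖(b x - b y) * ψ (x - y) * u n y‖₊ : ℝ≥0∞)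
      ≤ ENNReal.ofReal (2*B*M) * ((‖ψ (x - y)‖₊ : ℝ≥0∞) * K.indicator (fun _ => 1) y) := by
    intro n x y
    by_cases hy : y ∈ K
    · rw [Set.indicator_of_mem hy, mul_one, ← (fun z : ℂ => (ofReal_norm z).trans (enorm_eq_nnnorm z)),
        ← (fun z : ℂ => (ofReal_norm z).trans (enorm_eq_nnnorm z)), ← ENNReal.ofReal_mul (by positivity)]
      apply ENNReal.ofReal_le_ofReal
      rw [norm_mul, norm_mul]
      calc ‖b x - b y‖ * ‖ψ (x - y)‖ * ‖u n y‖
          ≤ (2*B) * ‖ψ (x - y)‖ * M :=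
            mul_le_mul (mul_le_mul_of_nonneg_right (hbxy x y) (norm_nonneg _))
              (hbdd n y) (norm_nonneg _) (by positivity)
        _ = 2*B*M * ‖ψ (x - y)‖ := by ring
    · have hu0 : u n y = 0 := by
        by_contra h
        exact hy (hsupp n (Function.mem_support.mpr h))
      simp [hu0]
  -- lintegral bound
  have hlint : ∀ n (x : (EuclideanSpace ℝ (Fin d))),
      (∫⁻ y, (‖(b x - b y) * ψ (x - y) * u n y‖₊ : ℝ≥0∞)) ≤ Ce := by
    intro n x
    calc (∫⁻ y, (‖(b x - b y) * ψ (x - y) * u n y‖₊ : ℝ≥0∞))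
        ≤ ∫⁻ y, ENNReal.ofReal (2*B*M)
            * ((‖ψ (x - y)‖₊ : ℝ≥0∞) * K.indicator (fun _ => 1) y) :=
          lintegral_mono (hpt n x)
      _ = ENNReal.ofReal (2*B*M)
            * ∫⁻ y, (‖ψ (x - y)‖₊ : ℝ≥0∞) * K.indicator (fun _ => 1) y :=
          lintegral_const_mul' _ _ ENNReal.ofReal_ne_top
      _ ≤ Ce := by rw [hCe]; exact mul_le_mul_right (key x) _
  -- uniform norm bound on C uₙ
  have hnorm : ∀ n (x : (EuclideanSpace ℝ (Fin d))), ‖∫ y, (b x - b y) * ψ (x - y) * u n y‖ ≤ Ce.toReal := by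
    intro n x
    calc ‖∫ y, (b x - b y) * ψ (x - y) * u n y‖
        ≤ (∫⁻ y, ENNReal.ofReal ‖(b x - b y) * ψ (x - y) * u n y‖).toReal :=
          norm_integral_le_lintegral_norm _
      _ ≤ Ce.toReal := by
          apply ENNReal.toReal_mono hCetop
          simp_rw [(fun z : ℂ => (ofReal_norm z).trans (enorm_eq_nnnorm z))]
          exact hlint n x
  -- pointwise convergence of C uₙ to 0
  have hptlim : ∀ x : (EuclideanSpace ℝ (Fin d)), Tendsto (fun n => ∫ y, (b x - b y) * ψ (x - y) * u n y)
      atTop (nhds 0) := by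
    intro x
    set g : (EuclideanSpace ℝ (Fin d)) → ℂ := fun y => (b x - b y) * ψ (x - y) * K.indicator (fun _ => (1:ℂ)) y with hg
    have hgm : AEStronglyMeasurable g volume := by
      exact (((continuous_const.sub hb).aestronglyMeasurable.mul (hψx x)).mul
        (aestronglyMeasurable_const.indicator hKm))
    have hgpt : ∀ y, (‖g y‖₊ : ℝ≥0∞)
        ≤ ENNReal.ofReal (2*B) * ((‖ψ (x - y)‖₊ : ℝ≥0∞) * K.indicator (fun _ => 1) y) := by
      intro y
      by_cases hy : y ∈ K
      · rw [hg]
        simp only [Set.indicator_of_mem hy, mul_one]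
        rw [← (fun z : ℂ => (ofReal_norm z).trans (enorm_eq_nnnorm z)), ← (fun z : ℂ => (ofReal_norm z).trans (enorm_eq_nnnorm z)),
          ← ENNReal.ofReal_mul (by positivity)]
        apply ENNReal.ofReal_le_ofReal
        rw [norm_mul]
        exact mul_le_mul_of_nonneg_right (hbxy x y) (norm_nonneg _)
      · simp [hg, Set.indicator_of_notMem hy]
    have hgint : Integrable g := by
      refine ⟨hgm, ?_⟩
      rw [HasFiniteIntegral]
      calc (∫⁻ y, (‖g y‖₊ : ℝ≥0∞))
          ≤ ∫⁻ y, ENNReal.ofReal (2*B)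
              * ((‖ψ (x - y)‖₊ : ℝ≥0∞) * K.indicator (fun _ => 1) y) :=
            lintegral_mono hgpt
        _ = ENNReal.ofReal (2*B)
              * ∫⁻ y, (‖ψ (x - y)‖₊ : ℝ≥0∞) * K.indicator (fun _ => 1) y :=
            lintegral_const_mul' _ _ ENNReal.ofReal_ne_top
        _ ≤ ENNReal.ofReal (2*B) * (S * (volume K) ^ (1/2 : ℝ)) :=
            mul_le_mul_right (key x) _
        _ < ⊤ := ENNReal.mul_lt_top ENNReal.ofReal_lt_top
            (ENNReal.mul_lt_top hψ.2
              (ENNReal.rpow_lt_top_of_nonneg (by norm_num) hK.measure_lt_top.ne))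
    have := hweak g hgint
    refine this.congr fun n => ?_
    apply integral_congr_ae (Eventually.of_forall fun y => ?_)
    by_cases hy : y ∈ K
    · rw [hg]; simp only [Set.indicator_of_mem hy, mul_one]; ring
    · have hu0 : u n y = 0 := by
        by_contra h
        exact hy (hsupp n (Function.mem_support.mpr h))
      simp [hu0]
  -- joint measurability of each C uₙ
  have hj : ∀ n, AEStronglyMeasurable
      (fun x => ∫ y, (b x - b y) * ψ (x - y) * u n y) (volume : Measure (EuclideanSpace ℝ (Fin d))) := by
    intro n
    have h1 : AEStronglyMeasurable (fun p : (EuclideanSpace ℝ (Fin d)) × (EuclideanSpace ℝ (Fin d)) => ψ (p.1 - p.2))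
        ((volume : Measure (EuclideanSpace ℝ (Fin d))).prod volume) :=
      hψ.1.comp_quasiMeasurePreserving (quasiMeasurePreserving_sub volume volume)
    have h2 : AEStronglyMeasurable
        (fun p : (EuclideanSpace ℝ (Fin d)) × (EuclideanSpace ℝ (Fin d)) => (b p.1 - b p.2) * ψ (p.1 - p.2) * u n p.2)
        ((volume : Measure (EuclideanSpace ℝ (Fin d))).prod volume) :=
      (((hb.comp continuous_fst).sub (hb.comp continuous_snd)).aestronglyMeasurable.mul h1).mul
        ((hum n).comp measurable_snd).aestronglyMeasurable
    exact h2.integral_prod_right'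
  -- dominated convergence
  have hVfin : volume V < ⊤ :=
    lt_of_le_of_lt (measure_mono subset_closure) hVc.measure_lt_top
  have hdom := tendsto_integral_of_dominated_convergence
    (μ := (volume : Measure (EuclideanSpace ℝ (Fin d))).restrict V)
    (F := fun n x => ‖∫ y, (b x - b y) * ψ (x - y) * u n y‖ ^ p₀)
    (f := fun _ => (0:ℝ))
    (bound := fun _ => Ce.toReal ^ p₀)
    (fun n => ((Real.continuous_rpow_const hp0).comp_aestronglyMeasurable
      (hj n).norm).restrict)
    (integrableOn_const hVfin.ne)
    (fun n => Eventually.of_forall fun x =>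
      by
        rw [Real.norm_of_nonneg (Real.rpow_nonneg (norm_nonneg _) _)]
        exact Real.rpow_le_rpow (norm_nonneg _) (hnorm n x) hp0)
    (Eventually.of_forall fun x => by
      have h := ((hptlim x).norm).rpow_const (Or.inr hp0)
      simpa [Real.zero_rpow (by linarith : p₀ ≠ 0)] using h)
  simpa using hdom
end

section
/- Let d be odd, κ = ⌊d/2⌋ + 1 (so that d + 1 − 2κ = 0, i.e., κ = (d+1)/2), and suppose ā_j ∈ L²(ℝᵈ) are functions such that for all s > 0, ∫_{‖x‖>s} |ā_j(x)| dx ≤ C₁ k (2^j s)^{d/2 − κ}, and set Ā_n = ∑_{j=0}^n ā_j. Then sup_n ∫_{‖x‖<s} ‖x‖ |Ā_n(x)| dx → 0 as s → 0. -/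
open MeasureTheory Real Filter Metric
open scoped ENNReal NNReal

/-- Key real computation: the dyadic-shell term equals a geometric term. -/
lemma stmt5_shell_calc (s : ℝ) (hs : 0 < s) (j m : ℕ) :
    s * (1/2:ℝ)^m * (((2:ℝ) ^ j * (s * (1/2:ℝ)^(m+1))) ^ (-(1/2) : ℝ))
      = Real.sqrt 2 * Real.sqrt s * ((Real.sqrt 2)⁻¹)^j * ((Real.sqrt 2)⁻¹)^m := by
  have hq0 : (0:ℝ) < Real.sqrt 2 := Real.sqrt_pos.mpr (by norm_num)
  have hc0 : (0:ℝ) < Real.sqrt s := Real.sqrt_pos.mpr hs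
  have h2 : (Real.sqrt 2)^2 = 2 := Real.sq_sqrt (by norm_num)
  have hsq : (Real.sqrt s)^2 = s := Real.sq_sqrt hs.le
  set q := Real.sqrt 2 with hqdef
  set c := Real.sqrt s with hcdef
  have hqne : q ≠ 0 := ne_of_gt hq0
  have hcne : c ≠ 0 := ne_of_gt hc0
  set X : ℝ := q^j * c / q^(m+1) with hX
  have hXpos : 0 < X := by positivity
  have hbase : (2:ℝ) ^ j * (s * (1/2:ℝ)^(m+1)) = X^2 := by
    have hXsq : X^2 = (q^2)^j * c^2 / (q^2)^(m+1) := by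
      rw [hX]; field_simp; ring
    rw [hXsq, h2, hsq, one_div, inv_pow]
    ring
  rw [hbase]
  have hrpow : (X^2 : ℝ) ^ (-(1/2) : ℝ) = X⁻¹ := by
    rw [← Real.rpow_natCast X 2, ← Real.rpow_mul hXpos.le]
    norm_num
    exact Real.rpow_neg_one X
  rw [hrpow, hX]
  have hhalf : (1/2:ℝ) = (q⁻¹)^2 := by
    rw [inv_pow, h2]; norm_num
  have hs' : s = c^2 := hsq.symm
  rw [hs', hhalf]
  field_simp
  have hinv : ∀ n : ℕ, q⁻¹ ^ n * q ^ n = 1 := fun n => by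
    rw [← mul_pow, inv_mul_cancel₀ hqne, one_pow]
  linear_combination (q * q⁻¹ ^ m) * hinv m - (q * q⁻¹ ^ m) * hinv j

/-- (`d` odd.) If each `ā_j` satisfies the exterior `L¹`
bound `∫_{‖x‖>s}|ā_j| ≤ C₁ k (2^j s)^{d/2−κ}` for all `s > 0`, then for the
partial sums `Ā_n = ∑_{j=0}^n ā_j` we have
`sup_n ∫_{‖x‖<s} ‖x‖ |Ā_n(x)| dx → 0` as `s → 0`. -/
theorem stmt5
    {d : ℕ} (hd : Odd d) (κ : ℕ) (hκ : κ = d / 2 + 1)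
    (k C₁ : ℝ) (hk : 0 < k) (hC₁ : 0 ≤ C₁)
    (abar : ℕ → EuclideanSpace ℝ (Fin d) → ℂ)
    (hmeas : ∀ j, Measurable (abar j))
    (hL2 : ∀ j, MemLp (abar j) 2 (volume : Measure (EuclideanSpace ℝ (Fin d))))
    (hbd : ∀ (j : ℕ) (s : ℝ), 0 < s →
      (∫⁻ x in {x : EuclideanSpace ℝ (Fin d) | s < ‖x‖}, ‖abar j x‖₊)
        ≤ ENNReal.ofReal (C₁ * k * ((2 : ℝ) ^ j * s) ^ ((d : ℝ) / 2 - κ))) :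
    ∀ ε : ℝ, 0 < ε → ∃ s₀ : ℝ, 0 < s₀ ∧ ∀ s : ℝ, 0 < s → s ≤ s₀ → ∀ n : ℕ,
      (∫⁻ x in {x : EuclideanSpace ℝ (Fin d) | ‖x‖ < s},
          (‖x‖₊ : ℝ≥0∞) * ‖∑ j ∈ Finset.range (n + 1), abar j x‖₊)
        ≤ ENNReal.ofReal ε := by
  -- the exponent is -1/2
  have hexp : (d : ℝ) / 2 - κ = -(1/2) := by
    obtain ⟨t, ht⟩ := hd
    subst ht
    have hdt : (2 * t + 1) / 2 = t := by omega
    rw [hκ, hdt]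
    push_cast
    ring
  have hbd' : ∀ (j : ℕ) (s : ℝ), 0 < s →
      (∫⁻ x in {x : EuclideanSpace ℝ (Fin d) | s < ‖x‖}, ‖abar j x‖₊)
        ≤ ENNReal.ofReal (C₁ * k * ((2 : ℝ) ^ j * s) ^ (-(1/2) : ℝ)) := by
    intro j s hs
    have h := hbd j s hs
    rwa [hexp] at h
  set q := Real.sqrt 2 with hqdef
  have hq0 : (0:ℝ) < q := Real.sqrt_pos.mpr (by norm_num)
  have hq1 : 1 < q := by
    rw [hqdef, show (1:ℝ) = Real.sqrt 1 from (Real.sqrt_one).symm]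
    exact Real.sqrt_lt_sqrt (by norm_num) (by norm_num)
  set r : ℝ := q⁻¹ with hrdef
  have hr0 : (0:ℝ) ≤ r := by positivity
  have hr1 : r < 1 := by
    have h := mul_inv_cancel₀ (ne_of_gt hq0)
    rw [hrdef]; nlinarith
  have h1r : (0:ℝ) < 1 - r := by linarith
  -- per-j bound
  have key : ∀ (j : ℕ) (s : ℝ), 0 < s →
      (∫⁻ x in {x : EuclideanSpace ℝ (Fin d) | ‖x‖ < s}, (‖x‖₊ : ℝ≥0∞) * ‖abar j x‖₊)
        ≤ ENNReal.ofReal (C₁ * k * q * Real.sqrt s * (1-r)⁻¹ * r^j) := by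
    intro j s hs
    set f : EuclideanSpace ℝ (Fin d) → ℝ≥0∞ :=
      fun x => (‖x‖₊ : ℝ≥0∞) * ‖abar j x‖₊ with hf
    set T : ℕ → Set (EuclideanSpace ℝ (Fin d)) :=
      fun m => {x | s*(1/2:ℝ)^(m+1) < ‖x‖ ∧ ‖x‖ ≤ s*(1/2:ℝ)^m} with hT
    set Z : Set (EuclideanSpace ℝ (Fin d)) := {x | ‖x‖ = 0} with hZ
    have hZmeas : MeasurableSet Z := measurable_norm (measurableSet_singleton 0)
    -- covering
    have hsub : {x : EuclideanSpace ℝ (Fin d) | ‖x‖ < s} ⊆ (⋃ m, T m) ∪ Z := by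
      intro x hx
      rcases eq_or_lt_of_le (norm_nonneg x) with h0 | h0
      · exact Or.inr h0.symm
      · left
        have hex : ∃ m : ℕ, s*(1/2:ℝ)^(m+1) < ‖x‖ := by
          obtain ⟨m, hm⟩ := exists_pow_lt_of_lt_one (div_pos h0 hs) (by norm_num : (1/2:ℝ) < 1)
          refine ⟨m, ?_⟩
          have h1 : (1/2:ℝ)^(m+1) ≤ (1/2:ℝ)^m :=
            pow_le_pow_of_le_one (by norm_num) (by norm_num) (Nat.le_succ m)
          have h2 : (1/2:ℝ)^m * s < ‖x‖ := (lt_div_iff₀ hs).mp hm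
          nlinarith [mul_le_mul_of_nonneg_left h1 hs.le]
        classical
        set m := Nat.find hex with hm
        have h1 : s*(1/2:ℝ)^(m+1) < ‖x‖ := Nat.find_spec hex
        refine Set.mem_iUnion.mpr ⟨m, h1, ?_⟩
        rcases Nat.eq_zero_or_pos m with hm0 | hmpos
        · rw [hm0]; simpa using hx.le
        · have hlt : m - 1 < m := Nat.sub_lt hmpos one_pos
          have hmin := Nat.find_min hex hlt
          push_neg at hmin
          have hmin' : ‖x‖ ≤ s * (1/2:ℝ)^(m-1+1) := hmin
          rwa [Nat.sub_add_cancel hmpos] at hmin'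
    -- integral over Z is zero
    have hZzero : ∫⁻ x in Z, f x = 0 := by
      have hae : ∀ᵐ x ∂(volume.restrict Z), f x = 0 := by
        refine (ae_restrict_iff' hZmeas).mpr (ae_of_all _ fun x hx => ?_)
        have hx0 : x = 0 := norm_eq_zero.mp hx
        simp [hf, hx0]
      rw [lintegral_congr_ae hae, lintegral_zero]
    -- shell bound
    have hshell : ∀ m : ℕ, ∫⁻ x in T m, f x
        ≤ ENNReal.ofReal (C₁ * k * q * Real.sqrt s * r^j * r^m) := by
      intro m
      have hb1 : ∫⁻ x in T m, f x
          ≤ ∫⁻ x in T m, ENNReal.ofReal (s*(1/2:ℝ)^m) * ‖abar j x‖₊ := by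
        refine setLIntegral_mono
          (measurable_const.mul ((hmeas j).nnnorm.coe_nnreal_ennreal)) (fun x hx => ?_)
        have hxle : (‖x‖₊ : ℝ≥0∞) ≤ ENNReal.ofReal (s*(1/2:ℝ)^m) := by
          rw [← ENNReal.ofReal_coe_nnreal, coe_nnnorm]
          exact ENNReal.ofReal_le_ofReal hx.2
        exact mul_le_mul_left hxle _
      rw [lintegral_const_mul _ ((hmeas j).nnnorm.coe_nnreal_ennreal)] at hb1
      have hb2 : ∫⁻ x in T m, (‖abar j x‖₊ : ℝ≥0∞)
          ≤ ∫⁻ x in {x : EuclideanSpace ℝ (Fin d) | s*(1/2:ℝ)^(m+1) < ‖x‖}, ‖abar j x‖₊ :=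
        lintegral_mono_set (fun x hx => hx.1)
      have hspos : 0 < s*(1/2:ℝ)^(m+1) := by positivity
      have hb3 := hbd' j (s*(1/2:ℝ)^(m+1)) hspos
      calc ∫⁻ x in T m, f x
          ≤ ENNReal.ofReal (s*(1/2:ℝ)^m) * ∫⁻ x in T m, (‖abar j x‖₊ : ℝ≥0∞) := hb1
        _ ≤ ENNReal.ofReal (s*(1/2:ℝ)^m) *
            ENNReal.ofReal (C₁ * k * ((2:ℝ)^j * (s*(1/2:ℝ)^(m+1))) ^ (-(1/2) : ℝ)) :=
            mul_le_mul_right (le_trans hb2 hb3) _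
        _ = ENNReal.ofReal (C₁ * k * q * Real.sqrt s * r^j * r^m) := by
            rw [← ENNReal.ofReal_mul (by positivity)]
            congr 1
            have hc := stmt5_shell_calc s hs j m
            rw [hrdef, hqdef]
            linear_combination (C₁ * k) * hc
    -- sum the shells
    have hsum : ∑' m : ℕ, ∫⁻ x in T m, f x
        ≤ ENNReal.ofReal (C₁ * k * q * Real.sqrt s * (1-r)⁻¹ * r^j) := by
      have hle : ∑' m : ℕ, ∫⁻ x in T m, f x
          ≤ ∑' m : ℕ, ENNReal.ofReal (C₁ * k * q * Real.sqrt s * r^j * r^m) :=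
        ENNReal.tsum_le_tsum hshell
      refine hle.trans ?_
      have hnn : ∀ m : ℕ, 0 ≤ C₁ * k * q * Real.sqrt s * r^j * r^m := by
        intro m; positivity
      have hsml : Summable (fun m : ℕ => C₁ * k * q * Real.sqrt s * r^j * r^m) :=
        (summable_geometric_of_lt_one hr0 hr1).mul_left _
      rw [← ENNReal.ofReal_tsum_of_nonneg hnn hsml]
      apply ENNReal.ofReal_le_ofReal
      rw [tsum_mul_left, tsum_geometric_of_lt_one hr0 hr1]
      exact le_of_eq (by ring)
    calc ∫⁻ x in {x : EuclideanSpace ℝ (Fin d) | ‖x‖ < s}, f x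
        ≤ ∫⁻ x in (⋃ m, T m) ∪ Z, f x := lintegral_mono_set hsub
      _ ≤ (∫⁻ x in (⋃ m, T m), f x) + ∫⁻ x in Z, f x := lintegral_union_le _ _ _
      _ = ∫⁻ x in (⋃ m, T m), f x := by rw [hZzero, add_zero]
      _ ≤ ∑' m : ℕ, ∫⁻ x in T m, f x := lintegral_iUnion_le _ _
      _ ≤ _ := hsum
  -- conclude
  intro ε hε
  set M : ℝ := C₁ * k * q * (1-r)⁻¹ * (1-r)⁻¹ with hMdef
  have hM0 : 0 ≤ M := by positivity
  refine ⟨min 1 ((ε/(M+1))^2), lt_min one_pos (by positivity), ?_⟩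
  intro s hs hss n
  have hsum1 : ∀ x : EuclideanSpace ℝ (Fin d),
      (‖x‖₊ : ℝ≥0∞) * ‖∑ j ∈ Finset.range (n+1), abar j x‖₊
      ≤ ∑ j ∈ Finset.range (n+1), (‖x‖₊ : ℝ≥0∞) * ‖abar j x‖₊ := by
    intro x
    rw [← Finset.mul_sum]
    refine mul_le_mul_right ?_ _
    calc ((‖∑ j ∈ Finset.range (n+1), abar j x‖₊ : ℝ≥0) : ℝ≥0∞)
        ≤ ((∑ j ∈ Finset.range (n+1), ‖abar j x‖₊ : ℝ≥0) : ℝ≥0∞) :=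
          ENNReal.coe_le_coe.mpr (nnnorm_sum_le _ _)
      _ = ∑ j ∈ Finset.range (n+1), (‖abar j x‖₊ : ℝ≥0∞) := by push_cast; rfl
  have hmeas' : ∀ j ∈ Finset.range (n+1),
      Measurable (fun x : EuclideanSpace ℝ (Fin d) => (‖x‖₊ : ℝ≥0∞) * ‖abar j x‖₊) :=
    fun j _ =>
      (measurable_nnnorm.coe_nnreal_ennreal).mul ((hmeas j).nnnorm.coe_nnreal_ennreal)
  have hsqs : Real.sqrt s ≤ ε/(M+1) := by
    have h1 : s ≤ (ε/(M+1))^2 := le_trans hss (min_le_right _ _)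
    have h2 : Real.sqrt s ≤ Real.sqrt ((ε/(M+1))^2) := Real.sqrt_le_sqrt h1
    rwa [Real.sqrt_sq (by positivity)] at h2
  calc (∫⁻ x in {x : EuclideanSpace ℝ (Fin d) | ‖x‖ < s},
          (‖x‖₊ : ℝ≥0∞) * ‖∑ j ∈ Finset.range (n + 1), abar j x‖₊)
      ≤ ∫⁻ x in {x : EuclideanSpace ℝ (Fin d) | ‖x‖ < s},
          ∑ j ∈ Finset.range (n+1), (‖x‖₊ : ℝ≥0∞) * ‖abar j x‖₊ :=
        lintegral_mono hsum1
    _ = ∑ j ∈ Finset.range (n+1), ∫⁻ x in {x : EuclideanSpace ℝ (Fin d) | ‖x‖ < s},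
          (‖x‖₊ : ℝ≥0∞) * ‖abar j x‖₊ := lintegral_finset_sum _ hmeas'
    _ ≤ ∑ j ∈ Finset.range (n+1),
          ENNReal.ofReal (C₁ * k * q * Real.sqrt s * (1-r)⁻¹ * r^j) :=
        Finset.sum_le_sum (fun j _ => key j s hs)
    _ = ENNReal.ofReal (∑ j ∈ Finset.range (n+1),
          C₁ * k * q * Real.sqrt s * (1-r)⁻¹ * r^j) :=
        (ENNReal.ofReal_sum_of_nonneg (fun j _ => by positivity)).symm
    _ ≤ ENNReal.ofReal ε := by
        apply ENNReal.ofReal_le_ofReal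
        have hsum2 : ∑ j ∈ Finset.range (n+1), r^j ≤ (1-r)⁻¹ := by
          have h := Summable.sum_le_tsum (Finset.range (n+1)) (fun j _ => by positivity)
            (summable_geometric_of_lt_one hr0 hr1)
          rwa [tsum_geometric_of_lt_one hr0 hr1] at h
        have heq : ∑ j ∈ Finset.range (n+1), C₁ * k * q * Real.sqrt s * (1-r)⁻¹ * r^j
            = C₁ * k * q * Real.sqrt s * (1-r)⁻¹ * ∑ j ∈ Finset.range (n+1), r^j := by
          rw [Finset.mul_sum]
        rw [heq]
        have hstep : C₁ * k * q * Real.sqrt s * (1-r)⁻¹ * (∑ j ∈ Finset.range (n+1), r^j)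
            ≤ M * Real.sqrt s := by
          rw [hMdef]
          have hpos : 0 ≤ C₁ * k * q * Real.sqrt s * (1-r)⁻¹ := by positivity
          nlinarith [hsum2, hpos]
        refine hstep.trans ?_
        have hMs : M * Real.sqrt s ≤ M * (ε/(M+1)) :=
          mul_le_mul_of_nonneg_left hsqs hM0
        refine hMs.trans ?_
        rw [div_eq_mul_inv, mul_comm ε, ← mul_assoc]
        have h1 : (0:ℝ) < M + 1 := by linarith
        have h2 : M * (M+1)⁻¹ ≤ 1 := by
          rw [mul_inv_le_iff₀ h1]; linarith
        nlinarith
end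

section
/- Let a ∈ C(ℝᵈ) be bounded with compact support, let ψ = F̄(a) ∈ L²(ℝᵈ) be its inverse Fourier transform, and let b ∈ C₀(ℝᵈ). Define A u = ψ ⋆ u (convolution) for u ∈ L∞ with compact support, and B u = b·u. Then the commutator C = A∘B − B∘A is given by (Cu)(x) = ∫_{ℝᵈ}(b(y) − b(x))ψ(x−y)u(y)dy, and C is a compact operator from L∞-functions supported in a fixed compact set K into L^{p₀}(V) for every relatively compact V ⊂ ℝᵈ and every p₀ ≥ 1. -/
open MeasureTheory Real Filter Metric
open scoped FourierTransform

noncomputable section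

lemma aux_integrable {d : ℕ} {K : Set (EuclideanSpace ℝ (Fin d))} (hK : IsCompact K)
    {f : EuclideanSpace ℝ (Fin d) → ℂ} (hf : Measurable f) {C : ℝ}
    (hC : ∀ y ∈ K, ‖f y‖ ≤ C) (hs : Function.support f ⊆ K) : Integrable f := by
  have hCK : Integrable (K.indicator fun _ => C) := by
    rw [integrable_indicator_iff hK.measurableSet]
    exact integrableOn_const hK.measure_lt_top.ne
  refine Integrable.mono' hCK hf.aestronglyMeasurable (ae_of_all _ fun y => ?_)
  by_cases hy : y ∈ K
  · simpa [Set.indicator_of_mem hy] using hC y hy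
  · have h0 : f y = 0 := Function.notMem_support.mp fun h => hy (hs h)
    simp [h0, Set.indicator_of_notMem hy]

/-- For `a` continuous with compact support, `ψ = 𝓕⁻ a`,
`b ∈ C₀`, `A u = ψ ⋆ u` and `B u = b u`, the commutator `C = AB − BA` is
`(C u)(x) = ∫ (b y − b x) ψ(x−y) u y dy`, and `C` is compact from `L∞`
functions supported in a fixed compact `K` into `L^{p₀}(V)` for every
relatively compact `V` and `p₀ ≥ 1` (sequential form). -/
theorem stmt6
    {d : ℕ} (a b : EuclideanSpace ℝ (Fin d) → ℂ)
    (ha : Continuous a) (hasupp : HasCompactSupport a)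
    (hb : Continuous b) (hbsupp : HasCompactSupport b)
    (ψ : EuclideanSpace ℝ (Fin d) → ℂ) (hψ : ψ = 𝓕⁻ a)
    (A : (EuclideanSpace ℝ (Fin d) → ℂ) → EuclideanSpace ℝ (Fin d) → ℂ)
    (hA : ∀ u x, A u x = ∫ y, ψ (x - y) * u y)
    (K : Set (EuclideanSpace ℝ (Fin d))) (hK : IsCompact K) :
    (∀ (u : EuclideanSpace ℝ (Fin d) → ℂ), Measurable u →
      (∃ M, ∀ x, ‖u x‖ ≤ M) → Function.support u ⊆ K →
      ∀ x, A (fun y => b y * u y) x - b x * A u x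
        = ∫ y, (b y - b x) * ψ (x - y) * u y) ∧
    (∀ (u : ℕ → EuclideanSpace ℝ (Fin d) → ℂ) (M : ℝ),
      (∀ n, Measurable (u n)) → (∀ n x, ‖u n x‖ ≤ M) →
      (∀ n, Function.support (u n) ⊆ K) →
      (∀ g : EuclideanSpace ℝ (Fin d) → ℂ, Integrable g →
        Tendsto (fun n => ∫ y, u n y * g y) atTop (nhds 0)) →
      ∀ (V : Set (EuclideanSpace ℝ (Fin d))), IsOpen V → IsCompact (closure V) →
      ∀ p₀ : ℝ, 1 ≤ p₀ →
        Tendsto (fun n => ∫ x in V,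
            ‖A (fun y => b y * u n y) x - b x * A (u n) x‖ ^ p₀)
          atTop (nhds 0)) := by
  have haint : Integrable a := ha.integrable_of_hasCompactSupport hasupp
  have hψc : Continuous ψ := by
    rw [hψ]
    exact VectorFourier.fourierIntegral_continuous Real.continuous_fourierChar
      (by exact continuous_inner.neg) haint
  obtain ⟨Cb, hCb⟩ : ∃ Cb, ∀ x, ‖b x‖ ≤ Cb := hbsupp.exists_bound_of_continuous hb
  have hCb0 : 0 ≤ Cb := le_trans (norm_nonneg _) (hCb 0)
  -- Part 1
  have part1 : ∀ (u : EuclideanSpace ℝ (Fin d) → ℂ), Measurable u →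
      (∃ M, ∀ x, ‖u x‖ ≤ M) → Function.support u ⊆ K →
      ∀ x, A (fun y => b y * u y) x - b x * A u x
        = ∫ y, (b y - b x) * ψ (x - y) * u y := by
    rintro u hu ⟨M, hM⟩ hsupp x
    obtain ⟨Cψ, hCψ⟩ := ((hK.image (continuous_const.sub continuous_id)).exists_bound_of_continuousOn hψc.continuousOn)
    have hCψK : ∀ y ∈ K, ‖ψ (x - y)‖ ≤ Cψ := fun y hy => hCψ _ ⟨y, hy, rfl⟩
    have hmes : Measurable fun y => ψ (x - y) :=
      hψc.measurable.comp (measurable_const.sub measurable_id)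
    have hi2 : Integrable fun y => ψ (x - y) * u y := by
      refine aux_integrable hK (hmes.mul hu) (C := Cψ * M) (fun y hy => ?_) ?_
      · rw [norm_mul]
        exact mul_le_mul (hCψK y hy) (hM y) (norm_nonneg _)
          (le_trans (norm_nonneg _) (hCψK y hy))
      · intro y hy
        exact hsupp (fun h0 => hy (by simp [h0]))
    have hi1 : Integrable fun y => ψ (x - y) * (b y * u y) := by
      refine aux_integrable hK (hmes.mul (hb.measurable.mul hu)) (C := Cψ * (Cb * M))
        (fun y hy => ?_) ?_
      · rw [norm_mul, norm_mul]
        have h1 : 0 ≤ Cψ := le_trans (norm_nonneg _) (hCψK y hy)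
        have h2 : 0 ≤ M := le_trans (norm_nonneg _) (hM y)
        gcongr
        · exact hCψK y hy
        · exact hCb y
        · exact hM y
      · intro y hy
        exact hsupp (fun h0 => hy (by simp [h0]))
    rw [hA, hA, ← integral_const_mul, ← integral_sub hi1 (hi2.const_mul _)]
    congr 1
    funext y
    ring
  refine ⟨part1, ?_⟩
  intro u M hu hM hsupp hweak V hV hVc p₀ hp₀
  have hp₀0 : 0 < p₀ := lt_of_lt_of_le one_pos hp₀
  have hM0 : 0 ≤ M := le_trans (norm_nonneg _) (hM 0 0)
  set S : Set (EuclideanSpace ℝ (Fin d)) := (fun p : _ × _ => p.1 - p.2) '' (closure V ×ˢ K)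
    with hSdef
  have hS : IsCompact S := (hVc.prod hK).image (continuous_fst.sub continuous_snd)
  obtain ⟨Cψ₀, hCψ₀⟩ := hS.exists_bound_of_continuousOn hψc.continuousOn
  set Cψ : ℝ := max Cψ₀ 0 with hCψdef
  have hCψ0 : 0 ≤ Cψ := le_max_right _ _
  have hCψK : ∀ x ∈ V, ∀ y ∈ K, ‖ψ (x - y)‖ ≤ Cψ := fun x hx y hy =>
    le_trans (hCψ₀ _ ⟨(x, y), ⟨subset_closure hx, hy⟩, rfl⟩) (le_max_left _ _)
  set B : ℝ := 2 * Cb * Cψ * M * (volume K).toReal with hB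
  have hB0 : 0 ≤ B := by positivity
  have key : ∀ n x, A (fun y => b y * u n y) x - b x * A (u n) x
      = ∫ y, (b y - b x) * ψ (x - y) * u n y := fun n x =>
    part1 (u n) (hu n) ⟨M, hM n⟩ (hsupp n) x
  have heq : (fun n => ∫ x in V,
        ‖A (fun y => b y * u n y) x - b x * A (u n) x‖ ^ p₀)
      = fun n => ∫ x in V, ‖∫ y, (b y - b x) * ψ (x - y) * u n y‖ ^ p₀ := by
    funext n; congr 1; funext x; rw [key n x]
  rw [heq]
  have hVfin : volume V < ⊤ := lt_of_le_of_lt (measure_mono subset_closure) hVc.measure_lt_top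
  -- measurability
  have hmesC : ∀ n, AEStronglyMeasurable
      (fun x => ‖∫ y, (b y - b x) * ψ (x - y) * u n y‖ ^ p₀) (volume.restrict V) := by
    intro n
    have h2 : StronglyMeasurable fun p : EuclideanSpace ℝ (Fin d) × EuclideanSpace ℝ (Fin d) =>
        (b p.2 - b p.1) * ψ (p.1 - p.2) * u n p.2 :=
      Measurable.stronglyMeasurable
        ((((hb.measurable.comp measurable_snd).sub (hb.measurable.comp measurable_fst)).mul
          (hψc.measurable.comp (measurable_fst.sub measurable_snd))).mul
          ((hu n).comp measurable_snd))
    have h3 : StronglyMeasurable fun x => ∫ y, (b y - b x) * ψ (x - y) * u n y :=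
      h2.integral_prod_right'
    exact (((Real.continuous_rpow_const hp₀0.le).measurable.comp h3.measurable.norm)).aestronglyMeasurable
  -- pointwise bound
  have hbound : ∀ n, ∀ x ∈ V, ‖∫ y, (b y - b x) * ψ (x - y) * u n y‖ ≤ B := by
    intro n x hx
    have hind : Integrable (K.indicator fun _ => (2 * Cb * Cψ * M : ℝ)) := by
      rw [integrable_indicator_iff hK.measurableSet]
      exact integrableOn_const hK.measure_lt_top.ne
    have hle : ∀ y, ‖(b y - b x) * ψ (x - y) * u n y‖
        ≤ K.indicator (fun _ => (2 * Cb * Cψ * M : ℝ)) y := by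
      intro y
      by_cases hy : y ∈ K
      · rw [Set.indicator_of_mem hy, norm_mul, norm_mul]
        calc ‖b y - b x‖ * ‖ψ (x - y)‖ * ‖u n y‖
            ≤ (2 * Cb) * Cψ * M := by
              gcongr
              · calc ‖b y - b x‖ ≤ ‖b y‖ + ‖b x‖ := norm_sub_le _ _
                  _ ≤ Cb + Cb := add_le_add (hCb y) (hCb x)
                  _ = 2 * Cb := by ring
              · exact hCψK x hx y hy
              · exact hM n y
          _ = 2 * Cb * Cψ * M := by ring
      · have h0 : u n y = 0 := Function.notMem_support.mp fun h => hy (hsupp n h)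
        simp [h0, Set.indicator_of_notMem hy]
    calc ‖∫ y, (b y - b x) * ψ (x - y) * u n y‖
        ≤ ∫ y, K.indicator (fun _ => (2 * Cb * Cψ * M : ℝ)) y :=
          norm_integral_le_of_norm_le hind (ae_of_all _ hle)
      _ = (volume K).toReal • (2 * Cb * Cψ * M : ℝ) :=
          integral_indicator_const _ hK.measurableSet
      _ = B := by rw [hB, smul_eq_mul]; ring
  -- pointwise convergence
  have hlim : ∀ x ∈ V,
      Tendsto (fun n => ‖∫ y, (b y - b x) * ψ (x - y) * u n y‖ ^ p₀) atTop (nhds 0) := by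
    intro x hx
    set g : EuclideanSpace ℝ (Fin d) → ℂ :=
      K.indicator (fun y => (b y - b x) * ψ (x - y)) with hg
    have hgmes : Measurable g :=
      Measurable.indicator ((hb.measurable.sub measurable_const).mul
        (hψc.measurable.comp (measurable_const.sub measurable_id))) hK.measurableSet
    have hgint : Integrable g := by
      refine aux_integrable hK hgmes (C := 2 * Cb * Cψ) (fun y hy => ?_) ?_
      · rw [hg, Set.indicator_of_mem hy, norm_mul]
        gcongr
        · calc ‖b y - b x‖ ≤ ‖b y‖ + ‖b x‖ := norm_sub_le _ _
            _ ≤ Cb + Cb := add_le_add (hCb y) (hCb x)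
            _ = 2 * Cb := by ring
        · exact hCψK x hx y hy
      · exact Set.support_indicator_subset
    have hint_eq : ∀ n, (∫ y, u n y * g y) = ∫ y, (b y - b x) * ψ (x - y) * u n y := by
      intro n
      congr 1
      funext y
      by_cases hy : y ∈ K
      · rw [hg]; simp only [Set.indicator_of_mem hy]; ring
      · have h0 : u n y = 0 := Function.notMem_support.mp fun h => hy (hsupp n h)
        simp [h0]
    have h1 : Tendsto (fun n => ∫ y, (b y - b x) * ψ (x - y) * u n y) atTop (nhds 0) := by
      have := hweak g hgint
      simpa only [hint_eq] using this
    have h2 : Tendsto (fun n => ‖∫ y, (b y - b x) * ψ (x - y) * u n y‖) atTop (nhds 0) := by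
      simpa using h1.norm
    have h3 : ContinuousAt (fun t : ℝ => t ^ p₀) 0 :=
      Real.continuousAt_rpow_const 0 p₀ (Or.inr hp₀0.le)
    have := h3.tendsto.comp h2
    simpa [Function.comp_def, Real.zero_rpow hp₀0.ne'] using this
  -- dominated convergence
  have hdc := tendsto_integral_of_dominated_convergence (μ := volume.restrict V)
    (F := fun n x => ‖∫ y, (b y - b x) * ψ (x - y) * u n y‖ ^ p₀)
    (f := fun _ => 0) (bound := fun _ => B ^ p₀)
    hmesC
    (integrableOn_const hVfin.ne)
    (fun n => (ae_restrict_iff' hV.measurableSet).2 (ae_of_all _ fun x hx => by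
      rw [Real.norm_eq_abs, abs_of_nonneg (Real.rpow_nonneg (norm_nonneg _) _)]
      exact Real.rpow_le_rpow (norm_nonneg _) (hbound n x hx) hp₀0.le))
    ((ae_restrict_iff' hV.measurableSet).2 (ae_of_all _ fun x hx => hlim x hx))
  simpa using hdc
end
end
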